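/- There exists a universal constant c > 0 such that the following holds. Let n ≥ 3, A, B ∈ (0,1), and let ρ, ρ* ∈ ℝ^n satisfy A ≤ ρ_i ≤ 1−B and A ≤ ρ*_i ≤ 1−B for all i. Then Σ_{i=1}^n ( Σ_{j≠i} (ρ*_i ρ*_j − ρ_i ρ_j)·λ_j(ρ) )² ≥ c · (A¹² B⁸ / n¹¹) · Σ_{i=1}^n (ρ_i − ρ*_i)². (The left-hand side equals Σ_i (E_{μ^{t+1}}[x_i y] − E_{μ^t}[x_i y])² for the population EM iteration with unit variances.) -/

import Mathlib

open Finset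

set_option maxHeartbeats 1000000

/-- Conditional-mean coefficients for the one-latent-node Gaussian tree model. -/
noncomputable def lam (n : ℕ) (ρ : Fin n → ℝ) (j : Fin n) : ℝ :=
  (ρ j / (1 - ρ j ^ 2)) / (1 + ∑ k, ρ k ^ 2 / (1 - ρ k ^ 2))

/-- Core quantitative lemma. -/
lemma core_bound {n : ℕ} (hn : 3 ≤ n) (A B V ν : ℝ) (μ f w : Fin n → ℝ)
    (hA : 0 < A) (hA1 : A ≤ 1) (hB : 0 < B) (hB1 : B ≤ 1)
    (hV : 0 ≤ V) (hν : 0 ≤ ν)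
    (hμl : ∀ i, 2*A^2 ≤ μ i) (hμu : ∀ i, μ i * B ≤ 2)
    (hid : ∀ i, |f i * ((∑ j, μ j) - 2*μ i) - μ i * V| ≤ 2*ν)
    (hsum : (∑ j, f j) = -V)
    (hw : ∀ i, 0 ≤ w i) (hwμ : ∀ i, w i * μ i ≤ 2*|f i|) :
    ∀ i, A^6*B*(w i) ≤ 3*(n:ℝ)^2*ν := by
  have hn0 : 0 < n := by omega
  have hA2 : 0 < A^2 := by positivity
  obtain ⟨M, hM⟩ : ∃ x : ℝ, x = ∑ j, μ j := ⟨_, rfl⟩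
  simp only [← hM] at hid
  -- choose b maximizing μ
  obtain ⟨b, -, hb⟩ := Finset.exists_max_image (univ : Finset (Fin n)) μ ⟨⟨0, hn0⟩, mem_univ _⟩
  have hbmax : ∀ i, μ i ≤ μ b := fun i => hb i (mem_univ i)
  have herase_ne : (univ.erase b).Nonempty := by
    rw [← Finset.card_pos, Finset.card_erase_of_mem (mem_univ b), Finset.card_univ,
      Fintype.card_fin]
    omega
  obtain ⟨i₂, hi₂mem, hi₂⟩ := Finset.exists_max_image (univ.erase b) μ herase_ne
  obtain ⟨D₂, hD₂def⟩ : ∃ x : ℝ, x = M - 2*μ i₂ := ⟨_, rfl⟩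
  obtain ⟨ζ, hζdef⟩ : ∃ x : ℝ, x = M - μ b - μ i₂ := ⟨_, rfl⟩
  obtain ⟨P, hPdef⟩ : ∃ x : ℝ, x = (M - μ b)*ζ := ⟨_, rfl⟩
  have herase2_ne : ((univ.erase b).erase i₂).Nonempty := by
    rw [← Finset.card_pos, Finset.card_erase_of_mem hi₂mem,
      Finset.card_erase_of_mem (mem_univ b), Finset.card_univ, Fintype.card_fin]
    omega
  obtain ⟨j₀, hj₀⟩ := herase2_ne
  have hζsum : ζ = ∑ i ∈ (univ.erase b).erase i₂, μ i := by
    rw [Finset.sum_erase_eq_sub hi₂mem, Finset.sum_erase_eq_sub (mem_univ b), ← hM, hζdef]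
  have hμpos : ∀ i, 0 < μ i := fun i => lt_of_lt_of_le (by positivity) (hμl i)
  have hζ : 2*A^2 ≤ ζ := by
    rw [hζsum]
    calc 2*A^2 ≤ μ j₀ := hμl j₀
    _ ≤ ∑ i ∈ (univ.erase b).erase i₂, μ i :=
        Finset.single_le_sum (fun i _ => (hμpos i).le) hj₀
  have hMb' : M - μ b = ∑ i ∈ univ.erase b, μ i := by
    rw [Finset.sum_erase_eq_sub (mem_univ b), ← hM]
  have hMb : 4*A^2 ≤ M - μ b := by
    have h1 : M - μ b = μ i₂ + ζ := by rw [hζdef]; ring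
    linarith [hμl i₂, hζ]
  have hMbpos : 0 < M - μ b := by linarith [hMb, hA2]
  have hζpos : 0 < ζ := by linarith [hζ, hA2]
  have hPpos : 0 < P := by rw [hPdef]; exact mul_pos hMbpos hζpos
  have hP : 8*A^4 ≤ P := by
    rw [hPdef]
    calc 8*A^4 = (4*A^2)*(2*A^2) := by ring
    _ ≤ (M - μ b)*ζ := mul_le_mul hMb hζ (by positivity) (le_of_lt hMbpos)
  have hD₂ζ : ζ ≤ D₂ := by
    have := hbmax i₂
    rw [hD₂def, hζdef]
    linarith
  have hD₂ : 2*A^2 ≤ D₂ := le_trans hζ hD₂ζ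
  have hD₂pos : 0 < D₂ := by linarith [hD₂, hA2]
  have hMB : M * B ≤ 2*n := by
    rw [hM, Finset.sum_mul]
    calc ∑ j, μ j * B ≤ ∑ _j : Fin n, (2:ℝ) := Finset.sum_le_sum (fun j _ => hμu j)
    _ = 2*n := by rw [Finset.sum_const, Finset.card_univ, Fintype.card_fin]; ring
  have hMpos : 0 < M := by
    rw [hM]
    exact Finset.sum_pos (fun i _ => hμpos i) ⟨⟨0, hn0⟩, mem_univ _⟩
  have hD₂M : D₂ ≤ M := by
    have := hμpos i₂; rw [hD₂def]; linarith
  have hD₂B : D₂ * B ≤ 2*n := le_trans (mul_le_mul_of_nonneg_right hD₂M hB.le) hMB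
  have hMbB : (M - μ b) * B ≤ 2*n := by
    have h1 : 0 ≤ μ b * B := mul_nonneg (hμpos b).le hB.le
    nlinarith [hMB]
  -- light index bound : |f i| * D₂ ≤ μ i * V + 2ν  for i ≠ b
  have hlight : ∀ i ∈ univ.erase b, |f i| * D₂ ≤ μ i * V + 2*ν := by
    intro i hi
    have hμi2 : μ i ≤ μ i₂ := hi₂ i hi
    have hDi : D₂ ≤ M - 2*μ i := by rw [hD₂def]; linarith
    have h1 : |f i| * D₂ ≤ |f i| * (M - 2*μ i) :=
      mul_le_mul_of_nonneg_left hDi (abs_nonneg _)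
    have h2 : |f i| * (M - 2*μ i) ≤ |f i * (M - 2*μ i)| := by
      rw [abs_mul]
      exact mul_le_mul_of_nonneg_left (le_abs_self _) (abs_nonneg _)
    have h3 : |f i * (M - 2*μ i)| ≤ μ i * V + 2*ν := by
      have h5 := hid i
      have h4 : 0 ≤ μ i * V := mul_nonneg (hμpos i).le hV
      calc |f i * (M - 2*μ i)| = |(f i * (M - 2*μ i) - μ i * V) + μ i * V| := by ring_nf
      _ ≤ |f i * (M - 2*μ i) - μ i * V| + |μ i * V| := abs_add_le _ _
      _ ≤ 2*ν + (μ i * V) := by rw [abs_of_nonneg h4]; exact add_le_add_left h5 _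
      _ = μ i * V + 2*ν := by ring
    linarith
  -- sum over light indices
  have hcard : ((univ.erase b).card : ℝ) = (n : ℝ) - 1 := by
    rw [Finset.card_erase_of_mem (mem_univ b), Finset.card_univ, Fintype.card_fin]
    have h : (1:ℕ) ≤ n := by omega
    push_cast [Nat.cast_sub h]
    ring
  have hsumlight : D₂ * (∑ i ∈ univ.erase b, |f i|) ≤ (M - μ b)*V + 2*(n:ℝ)*ν := by
    have h1 : (∑ i ∈ univ.erase b, |f i|) * D₂ ≤ ∑ i ∈ univ.erase b, (μ i * V + 2*ν) := by
      rw [Finset.sum_mul]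
      exact Finset.sum_le_sum (fun i hi => hlight i hi)
    have h2 : ∑ i ∈ univ.erase b, (μ i * V + 2*ν) = (M - μ b)*V + ((n:ℝ)-1)*(2*ν) := by
      rw [Finset.sum_add_distrib, Finset.sum_const, ← Finset.sum_mul, ← hMb', nsmul_eq_mul, hcard]
    rw [h2] at h1
    have h3 : ((n:ℝ)-1)*(2*ν) ≤ 2*(n:ℝ)*ν := by nlinarith [hν]
    calc D₂ * (∑ i ∈ univ.erase b, |f i|) = (∑ i ∈ univ.erase b, |f i|) * D₂ := mul_comm _ _
    _ ≤ (M - μ b)*V + ((n:ℝ)-1)*(2*ν) := h1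
    _ ≤ (M - μ b)*V + 2*(n:ℝ)*ν := by linarith
  have hn3 : (3:ℝ) ≤ (n:ℝ) := by exact_mod_cast hn
  have hA21 : A^2 ≤ 1 := by nlinarith [sq_nonneg (1 - A), hA]
  have hA42 : A^4 ≤ A^2 := by
    calc A^4 = A^2*A^2 := by ring
    _ ≤ A^2*1 := mul_le_mul_of_nonneg_left hA21 (by positivity)
    _ = A^2 := mul_one _
  have hA64 : A^6 ≤ A^4 := by
    calc A^6 = A^4*A^2 := by ring
    _ ≤ A^4*1 := mul_le_mul_of_nonneg_left hA21 (by positivity)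
    _ = A^4 := mul_one _
  have hA6B : A^6*B ≤ A^4 := by
    calc A^6*B ≤ A^6*1 := mul_le_mul_of_nonneg_left hB1 (by positivity)
    _ = A^6 := mul_one _
    _ ≤ A^4 := hA64
  have hA4B : A^4*B ≤ A^4 := by
    calc A^4*B ≤ A^4*1 := mul_le_mul_of_nonneg_left hB1 (by positivity)
    _ = A^4 := mul_one _
  have hnn : 3*(n:ℝ) ≤ (n:ℝ)^2 := by
    calc 3*(n:ℝ) ≤ (n:ℝ)*(n:ℝ) := mul_le_mul_of_nonneg_right hn3 (by positivity)
    _ = (n:ℝ)^2 := by ring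
  have hμD : ∀ i, 4*A^4 ≤ μ i * D₂ := by
    intro i
    calc 4*A^4 = (2*A^2)*(2*A^2) := by ring
    _ ≤ μ i * D₂ := mul_le_mul (hμl i) hD₂ (by positivity) (hμpos i).le
  have hμP : ∀ i, 16*A^6 ≤ μ i * P := by
    intro i
    calc 16*A^6 = (2*A^2)*(8*A^4) := by ring
    _ ≤ μ i * P := mul_le_mul (hμl i) hP (by positivity) (hμpos i).le
  have hμζ : ∀ i, 4*A^4 ≤ μ i * ζ := by
    intro i
    calc 4*A^4 = (2*A^2)*(2*A^2) := by ring
    _ ≤ μ i * ζ := mul_le_mul (hμl i) hζ (by positivity) (hμpos i).le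
  -- case split
  rcases le_or_gt (V*(A^2*P)) (2*ν*P + 2*(n:ℝ)*ν*(D₂*A^2)) with hcase | hcase
  · -- Case 1 : V is small
    intro i
    by_cases hib : i = b
    · -- heavy index
      rw [hib]
      have h1 : f b = -V - ∑ j ∈ univ.erase b, f j := by
        have h := Finset.sum_erase_eq_sub (f := f) (mem_univ b)
        rw [hsum] at h
        linarith
      have hfb : |f b| ≤ V + (∑ j ∈ univ.erase b, |f j|) := by
        rw [h1, show -V - (∑ j ∈ univ.erase b, f j) = -(V + ∑ j ∈ univ.erase b, f j) by ring,
          abs_neg]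
        calc |(V + ∑ j ∈ univ.erase b, f j)| ≤ |V| + |(∑ j ∈ univ.erase b, f j)| := abs_add_le _ _
        _ ≤ V + (∑ j ∈ univ.erase b, |f j|) := by
            rw [abs_of_nonneg hV]
            exact add_le_add_right (Finset.abs_sum_le_sum_abs _ _) _
      have hkey : w b * μ b * D₂ ≤ 2*V*D₂ + 2*((M - μ b)*V + 2*(n:ℝ)*ν) := by
        have h2 : w b * μ b * D₂ ≤ 2*|f b| * D₂ :=
          mul_le_mul_of_nonneg_right (hwμ b) hD₂pos.le
        have h3 : 2*|f b| * D₂ ≤ 2*V*D₂ + 2*(D₂ * (∑ j ∈ univ.erase b, |f j|)) := by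
          linarith [mul_le_mul_of_nonneg_right hfb hD₂pos.le]
        linarith [hsumlight, h2, h3]
      have hbig : A^2*P*(w b * μ b * D₂) ≤
          2*D₂*(2*ν*P) + 2*D₂*(2*(n:ℝ)*ν*(D₂*A^2))
            + 2*(M - μ b)*(2*ν*P) + 2*(M - μ b)*(2*(n:ℝ)*ν*(D₂*A^2))
            + 4*(n:ℝ)*ν*(A^2*P) := by
        have h2 : 2*D₂*(V*(A^2*P)) ≤ 2*D₂*(2*ν*P + 2*(n:ℝ)*ν*(D₂*A^2)) :=
          mul_le_mul_of_nonneg_left hcase (by linarith)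
        have h3 : 2*(M - μ b)*(V*(A^2*P)) ≤ 2*(M - μ b)*(2*ν*P + 2*(n:ℝ)*ν*(D₂*A^2)) :=
          mul_le_mul_of_nonneg_left hcase (by linarith)
        have h1 : A^2*P*(w b * μ b * D₂) ≤ A^2*P*(2*V*D₂ + 2*((M - μ b)*V + 2*(n:ℝ)*ν)) :=
          mul_le_mul_of_nonneg_left hkey (mul_nonneg (by positivity) hPpos.le)
        linarith [h1, h2, h3]
      obtain ⟨t, htdef⟩ : ∃ x : ℝ, x = ν*(μ b*(D₂*P)) := ⟨_, rfl⟩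
      have ht : 0 ≤ t := by
        rw [htdef]
        exact mul_nonneg hν (mul_nonneg (hμpos b).le (mul_nonneg hD₂pos.le hPpos.le))
      have hνDP : (0:ℝ) ≤ ν*(D₂*P) := mul_nonneg hν (mul_nonneg hD₂pos.le hPpos.le)
      have s1 : A^4*B*(2*D₂*(2*ν*P)) ≤ 2*t := by
        have base : 4*(A^4*B) ≤ 2*μ b := by linarith [hμl b, hA42, hA4B]
        calc A^4*B*(2*D₂*(2*ν*P)) = (4*(A^4*B))*(ν*(D₂*P)) := by ring
        _ ≤ (2*μ b)*(ν*(D₂*P)) := mul_le_mul_of_nonneg_right base hνDP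
        _ = 2*t := by rw [htdef]; ring
      have s2 : A^4*B*(2*D₂*(2*(n:ℝ)*ν*(D₂*A^2))) ≤ ((n:ℝ)^2/2)*t := by
        have base : 4*(n:ℝ)*(A^6*B)*D₂ ≤ ((n:ℝ)^2/2)*(μ b*P) := by
          have e1 : 4*(n:ℝ)*A^6*(D₂*B) ≤ 4*(n:ℝ)*A^6*(2*(n:ℝ)) :=
            mul_le_mul_of_nonneg_left hD₂B (by positivity)
          have e2 : ((n:ℝ)^2/2)*(16*A^6) ≤ ((n:ℝ)^2/2)*(μ b*P) :=
            mul_le_mul_of_nonneg_left (hμP b) (by positivity)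
          linarith [e1, e2]
        have hνD : (0:ℝ) ≤ ν*D₂ := mul_nonneg hν hD₂pos.le
        calc A^4*B*(2*D₂*(2*(n:ℝ)*ν*(D₂*A^2))) = (4*(n:ℝ)*(A^6*B)*D₂)*(ν*D₂) := by ring
        _ ≤ (((n:ℝ)^2/2)*(μ b*P))*(ν*D₂) := mul_le_mul_of_nonneg_right base hνD
        _ = ((n:ℝ)^2/2)*t := by rw [htdef]; ring
      have s3 : A^4*B*(2*(M - μ b)*(2*ν*P)) ≤ 2*(n:ℝ)*t := by
        have base : 4*(A^4*B)*(M - μ b) ≤ 2*(n:ℝ)*(μ b*D₂) := by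
          have e1 : 4*A^4*((M - μ b)*B) ≤ 4*A^4*(2*(n:ℝ)) :=
            mul_le_mul_of_nonneg_left hMbB (by positivity)
          have e2 : 2*(n:ℝ)*(4*A^4) ≤ 2*(n:ℝ)*(μ b*D₂) :=
            mul_le_mul_of_nonneg_left (hμD b) (by positivity)
          linarith [e1, e2]
        have hνP : (0:ℝ) ≤ ν*P := mul_nonneg hν hPpos.le
        calc A^4*B*(2*(M - μ b)*(2*ν*P)) = (4*(A^4*B)*(M - μ b))*(ν*P) := by ring
        _ ≤ (2*(n:ℝ)*(μ b*D₂))*(ν*P) := mul_le_mul_of_nonneg_right base hνP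
        _ = 2*(n:ℝ)*t := by rw [htdef]; ring
      have s4 : A^4*B*(2*(M - μ b)*(2*(n:ℝ)*ν*(D₂*A^2))) ≤ (n:ℝ)*t := by
        have base : 4*(A^6*B) ≤ μ b*ζ := by linarith [hμζ b, hA6B]
        have hrest : (0:ℝ) ≤ (n:ℝ)*ν*(D₂*(M - μ b)) :=
          mul_nonneg (mul_nonneg (by positivity) hν) (mul_nonneg hD₂pos.le hMbpos.le)
        calc A^4*B*(2*(M - μ b)*(2*(n:ℝ)*ν*(D₂*A^2)))
            = (4*(A^6*B))*((n:ℝ)*ν*(D₂*(M - μ b))) := by ring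
        _ ≤ (μ b*ζ)*((n:ℝ)*ν*(D₂*(M - μ b))) := mul_le_mul_of_nonneg_right base hrest
        _ = (n:ℝ)*(ν*(μ b*(D₂*((M - μ b)*ζ)))) := by ring
        _ = (n:ℝ)*t := by rw [htdef, hPdef]
      have s5 : A^4*B*(4*(n:ℝ)*ν*(A^2*P)) ≤ (n:ℝ)*t := by
        have base : 4*(A^6*B) ≤ μ b*D₂ := by linarith [hμD b, hA6B]
        have hrest : (0:ℝ) ≤ (n:ℝ)*ν*P :=
          mul_nonneg (mul_nonneg (by positivity) hν) hPpos.le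
        calc A^4*B*(4*(n:ℝ)*ν*(A^2*P)) = (4*(A^6*B))*((n:ℝ)*ν*P) := by ring
        _ ≤ (μ b*D₂)*((n:ℝ)*ν*P) := mul_le_mul_of_nonneg_right base hrest
        _ = (n:ℝ)*t := by rw [htdef]; ring
      have hfinal : A^4*B*(A^2*P*(w b * μ b * D₂)) ≤ 3*(n:ℝ)^2*t := by
        have hsum5 := mul_le_mul_of_nonneg_left hbig (by positivity : (0:ℝ) ≤ A^4*B)
        have hcoef : ((n:ℝ)^2/2 + 4*(n:ℝ) + 2)*t ≤ 3*(n:ℝ)^2*t := by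
          apply mul_le_mul_of_nonneg_right _ ht
          linarith [hnn, hn3]
        linarith [hsum5, s1, s2, s3, s4, s5, hcoef]
      have hprod : 0 < μ b*(D₂*P) := mul_pos (hμpos b) (mul_pos hD₂pos hPpos)
      have hle : A^6*B*(w b)*(μ b*(D₂*P)) ≤ 3*(n:ℝ)^2*ν*(μ b*(D₂*P)) := by
        calc A^6*B*(w b)*(μ b*(D₂*P)) = A^4*B*(A^2*P*(w b * μ b * D₂)) := by ring
        _ ≤ 3*(n:ℝ)^2*t := hfinal
        _ = 3*(n:ℝ)^2*ν*(μ b*(D₂*P)) := by rw [htdef]; ring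
      exact le_of_mul_le_mul_right hle hprod
    · -- light index
      have him : i ∈ univ.erase b := Finset.mem_erase.mpr ⟨hib, mem_univ i⟩
      have hli := hlight i him
      have step1 : w i * μ i * D₂ ≤ 2*(μ i*V) + 4*ν := by
        have h2 : w i * μ i * D₂ ≤ 2*|f i| * D₂ :=
          mul_le_mul_of_nonneg_right (hwμ i) hD₂pos.le
        linarith [hli, h2]
      have step2 : A^2*B*(w i*D₂) ≤ 2*V + 2*ν := by
        have hwD : (0:ℝ) ≤ (B/2)*(w i*D₂) :=
          mul_nonneg (by positivity) (mul_nonneg (hw i) hD₂pos.le)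
        calc A^2*B*(w i*D₂) = (2*A^2)*((B/2)*(w i*D₂)) := by ring
        _ ≤ μ i*((B/2)*(w i*D₂)) := mul_le_mul_of_nonneg_right (hμl i) hwD
        _ = (B/2)*(w i*μ i*D₂) := by ring
        _ ≤ (B/2)*(2*(μ i*V) + 4*ν) := mul_le_mul_of_nonneg_left step1 (by positivity)
        _ = (μ i*B)*V + 2*B*ν := by ring
        _ ≤ 2*V + 2*ν := by
            have v1 : μ i*B*V ≤ 2*V := mul_le_mul_of_nonneg_right (hμu i) hV
            have v2 : B*ν ≤ 1*ν := mul_le_mul_of_nonneg_right hB1 hν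
            linarith [v1, v2]
      have step3 : A^6*B*(w i)*(D₂*P) ≤ 2*A^2*(2*ν*P + 2*(n:ℝ)*ν*(D₂*A^2)) + 2*A^4*(P*ν) := by
        have h2 : A^4*P*(A^2*B*(w i*D₂)) ≤ A^4*P*(2*V + 2*ν) :=
          mul_le_mul_of_nonneg_left step2 (mul_nonneg (by positivity) hPpos.le)
        have h3 : 2*A^2*(V*(A^2*P)) ≤ 2*A^2*(2*ν*P + 2*(n:ℝ)*ν*(D₂*A^2)) :=
          mul_le_mul_of_nonneg_left hcase (by positivity)
        linarith [h2, h3]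
      have step4 : 2*A^2*(2*ν*P + 2*(n:ℝ)*ν*(D₂*A^2)) + 2*A^4*(P*ν) ≤
          3*(n:ℝ)^2*ν*(D₂*P) := by
        have hνP : (0:ℝ) ≤ ν*P := mul_nonneg hν hPpos.le
        have hνD : (0:ℝ) ≤ ν*D₂ := mul_nonneg hν hD₂pos.le
        have u1 : 2*A^2*(2*ν*P) ≤ 2*ν*(D₂*P) := by
          calc 2*A^2*(2*ν*P) = (2*A^2)*(2*(ν*P)) := by ring
          _ ≤ D₂*(2*(ν*P)) := mul_le_mul_of_nonneg_right hD₂ (by linarith)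
          _ = 2*ν*(D₂*P) := by ring
        have u2 : 2*A^2*(2*(n:ℝ)*ν*(D₂*A^2)) ≤ ((n:ℝ)/2)*ν*(D₂*P) := by
          have hrest : (0:ℝ) ≤ ((n:ℝ)/2)*(ν*D₂) := mul_nonneg (by positivity) hνD
          calc 2*A^2*(2*(n:ℝ)*ν*(D₂*A^2)) = (8*A^4)*(((n:ℝ)/2)*(ν*D₂)) := by ring
          _ ≤ P*(((n:ℝ)/2)*(ν*D₂)) := mul_le_mul_of_nonneg_right hP hrest
          _ = ((n:ℝ)/2)*ν*(D₂*P) := by ring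
        have u3 : 2*A^4*(P*ν) ≤ ν*(D₂*P) := by
          have h4 : 2*A^4 ≤ D₂ := by linarith [hA42, hD₂]
          calc 2*A^4*(P*ν) = (2*A^4)*(P*ν) := by ring
          _ ≤ D₂*(P*ν) := mul_le_mul_of_nonneg_right h4 (mul_nonneg hPpos.le hν)
          _ = ν*(D₂*P) := by ring
        have hνDP : (0:ℝ) ≤ ν*(D₂*P) := mul_nonneg hν (mul_nonneg hD₂pos.le hPpos.le)
        have hcoef : (2 + (n:ℝ)/2 + 1)*(ν*(D₂*P)) ≤ 3*(n:ℝ)^2*(ν*(D₂*P)) := by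
          apply mul_le_mul_of_nonneg_right _ hνDP
          nlinarith [hn3]
        linarith [u1, u2, u3, hcoef]
      have hprod : 0 < D₂*P := mul_pos hD₂pos hPpos
      exact le_of_mul_le_mul_right (le_trans step3 step4) hprod
  · -- Case 2 : V is large, contradiction
    exfalso
    have hVpos : 0 < V := by
      rcases lt_or_ge 0 V with h | h
      · exact h
      · exfalso
        have h1 : V*(A^2*P) ≤ 0 :=
          mul_nonpos_of_nonpos_of_nonneg h (mul_nonneg (by positivity) hPpos.le)
        linarith [h1, hcase, mul_nonneg hν hPpos.le,
          mul_nonneg (mul_nonneg (mul_nonneg (by positivity : (0:ℝ) ≤ 2*(n:ℝ)) hν) hD₂pos.le)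
            hA2.le]
    have h2ν : 2*ν < A^2*V := by
      have h1 : (2*ν)*P < (A^2*V)*P := by
        linarith [hcase, mul_nonneg (mul_nonneg (by positivity : (0:ℝ) ≤ 2*(n:ℝ)) hν)
          (mul_nonneg hD₂pos.le hA2.le)]
      exact lt_of_mul_lt_mul_right h1 hPpos.le
    have hlightpos : ∀ i ∈ univ.erase b, 0 < f i := by
      intro i hi
      have hDi : D₂ ≤ M - 2*μ i := by
        have := hi₂ i hi
        rw [hD₂def]; linarith
      have hDipos : 0 < M - 2*μ i := lt_of_lt_of_le hD₂pos hDi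
      have hge : μ i * V - 2*ν ≤ f i * (M - 2*μ i) := by
        have h5 := (abs_le.mp (hid i)).1
        linarith
      have hgt : 0 < f i * (M - 2*μ i) := by
        have h6 : 2*A^2*V ≤ μ i*V := mul_le_mul_of_nonneg_right (hμl i) hV
        have h7 : 0 < A^2*V := mul_pos hA2 hVpos
        linarith [hge, h6, h2ν, h7]
      by_contra hle
      push_neg at hle
      linarith [mul_nonpos_of_nonpos_of_nonneg hle hDipos.le, hgt]
    have hSf : 0 ≤ ∑ i ∈ univ.erase b, f i :=
      Finset.sum_nonneg fun i hi => (hlightpos i hi).le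
    have hfbeq : f b = -V - ∑ j ∈ univ.erase b, f j := by
      have h := Finset.sum_erase_eq_sub (f := f) (mem_univ b)
      rw [hsum] at h
      linarith
    have hfbneg : f b < 0 := by rw [hfbeq]; linarith
    have hgeb : μ b * V - 2*ν ≤ f b * (M - 2*μ b) := by
      have h5 := (abs_le.mp (hid b)).1
      linarith
    have hgtb : 0 < f b * (M - 2*μ b) := by
      have h6 : 2*A^2*V ≤ μ b*V := mul_le_mul_of_nonneg_right (hμl b) hV
      have h7 : 0 < A^2*V := mul_pos hA2 hVpos
      linarith [hgeb, h6, h2ν, h7]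
    have hDbneg : M - 2*μ b < 0 := by
      by_contra hle
      push_neg at hle
      linarith [mul_nonpos_of_nonpos_of_nonneg hfbneg.le hle, hgtb]
    have hXpos : 0 < 2*μ b - M := by linarith
    have hXD₂ : 2*μ b - M ≤ D₂ := by
      have h7 : D₂ - (2*μ b - M) = 2*ζ := by rw [hD₂def, hζdef]; ring
      linarith [hζpos]
    have hSfD : D₂ * (∑ i ∈ univ.erase b, f i) ≤ (M - μ b)*V + 2*(n:ℝ)*ν := by
      refine le_trans ?_ hsumlight
      apply mul_le_mul_of_nonneg_left _ hD₂pos.le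
      exact Finset.sum_le_sum fun i _ => le_abs_self _
    have hchain : μ b*V - 2*ν ≤ (V + ∑ i ∈ univ.erase b, f i)*(2*μ b - M) := by
      have h8 : f b * (M - 2*μ b) = (V + ∑ i ∈ univ.erase b, f i)*(2*μ b - M) := by
        rw [hfbeq]; ring
      linarith [hgeb]
    have hchainD : (μ b*V - 2*ν)*D₂ ≤ (V*D₂ + ((M - μ b)*V + 2*(n:ℝ)*ν))*(2*μ b - M) := by
      have h9 : (μ b*V - 2*ν)*D₂ ≤ ((V + ∑ i ∈ univ.erase b, f i)*(2*μ b - M))*D₂ :=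
        mul_le_mul_of_nonneg_right hchain hD₂pos.le
      have h10 : (V + ∑ i ∈ univ.erase b, f i)*D₂ ≤ V*D₂ + ((M - μ b)*V + 2*(n:ℝ)*ν) := by
        linarith [hSfD]
      linarith [h9, mul_le_mul_of_nonneg_right h10 hXpos.le]
    have hident : μ b*D₂ = (D₂ + (M - μ b))*(2*μ b - M) + 2*P := by
      rw [hD₂def, hPdef, hζdef]; ring
    have hVP : 2*V*P ≤ 4*(n:ℝ)*ν*D₂ := by
      have hidentV : μ b*V*D₂ = (D₂ + (M - μ b))*(2*μ b - M)*V + 2*P*V := by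
        rw [hD₂def, hPdef, hζdef]; ring
      have hνD₂' : (0:ℝ) ≤ ν*D₂ := mul_nonneg hν hD₂pos.le
      have h12 : 2*(n:ℝ)*ν*(2*μ b - M) ≤ 2*(n:ℝ)*ν*D₂ :=
        mul_le_mul_of_nonneg_left hXD₂ (by positivity)
      have h13 : 2*(ν*D₂) ≤ 2*(n:ℝ)*(ν*D₂) := by
        have h14 : (2:ℝ) ≤ 2*(n:ℝ) := by linarith [hn3]
        exact mul_le_mul_of_nonneg_right h14 hνD₂'
      linarith [hchainD, hidentV, h12, h13]
    have hfinal2 : V*(A^2*P) ≤ 2*(n:ℝ)*ν*(D₂*A^2) := by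
      linarith [mul_le_mul_of_nonneg_right hVP hA2.le]
    linarith [hfinal2, hcase, mul_nonneg hν hPpos.le]

/-- The squared movement of the covariances in one population EM step dominates
the squared parameter error:
`∑_i (∑_{j≠i} (ρ*_i ρ*_j − ρ_i ρ_j) λ_j(ρ))² ≥ c (A¹² B⁸ / n¹¹) ∑_i (ρ_i − ρ*_i)²`. -/
theorem covariance_movement_lower_bound :
    ∃ c > (0 : ℝ), ∀ (n : ℕ), 3 ≤ n → ∀ (A B : ℝ),
      A ∈ Set.Ioo (0 : ℝ) 1 → B ∈ Set.Ioo (0 : ℝ) 1 →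
      ∀ ρ ρs : Fin n → ℝ,
        (∀ i, A ≤ ρ i ∧ ρ i ≤ 1 - B) → (∀ i, A ≤ ρs i ∧ ρs i ≤ 1 - B) →
        c * (A ^ 12 * B ^ 8 / (n : ℝ) ^ 11) * ∑ i, (ρ i - ρs i) ^ 2
          ≤ ∑ i, (∑ j ∈ Finset.univ.erase i,
              (ρs i * ρs j - ρ i * ρ j) * lam n ρ j) ^ 2 := by
  refine ⟨1/100, by norm_num, ?_⟩
  intro n hn A B hA hB ρ ρs hρ hρs
  obtain ⟨hA0, hA1⟩ := hA
  obtain ⟨hB0, hB1⟩ := hB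
  have hn0 : 0 < n := by omega
  have hn3 : (3:ℝ) ≤ (n:ℝ) := by exact_mod_cast hn
  have hnR : (0:ℝ) < (n:ℝ) := by linarith
  have hA1' : A ≤ 1 := hA1.le
  have hB1' : B ≤ 1 := hB1.le
  -- pointwise facts about ρ, ρs
  have hρpos : ∀ i, 0 < ρ i := fun i => lt_of_lt_of_le hA0 (hρ i).1
  have hρ1 : ∀ i, ρ i ≤ 1 := fun i => le_trans (hρ i).2 (by linarith)
  have hρspos : ∀ i, 0 < ρs i := fun i => lt_of_lt_of_le hA0 (hρs i).1
  have hρs1 : ∀ i, ρs i ≤ 1 := fun i => le_trans (hρs i).2 (by linarith)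
  have hden : ∀ i, B ≤ 1 - ρ i^2 := by
    intro i
    nlinarith [(hρ i).2, hρpos i, hρ1 i]
  have hdenpos : ∀ i, 0 < 1 - ρ i^2 := fun i => lt_of_lt_of_le hB0 (hden i)
  have hden1 : ∀ i, 1 - ρ i^2 ≤ 1 := by intro i; nlinarith [sq_nonneg (ρ i)]
  -- quantities
  obtain ⟨a, ha⟩ : ∃ x : Fin n → ℝ, x = fun i => ρ i / (1 - ρ i ^ 2) := ⟨_, rfl⟩
  obtain ⟨q, hq⟩ : ∃ x : Fin n → ℝ, x = fun i => ρ i ^ 2 / (1 - ρ i ^ 2) := ⟨_, rfl⟩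
  obtain ⟨p, hp⟩ : ∃ x : Fin n → ℝ, x = fun i => a i * ρs i := ⟨_, rfl⟩
  have ha' : ∀ i, a i = ρ i / (1 - ρ i ^ 2) := fun i => by rw [ha]
  have hq' : ∀ i, q i = ρ i ^ 2 / (1 - ρ i ^ 2) := fun i => by rw [hq]
  have hp' : ∀ i, p i = a i * ρs i := fun i => by rw [hp]
  have hapos : ∀ i, 0 < a i := by
    intro i; rw [ha']; exact div_pos (hρpos i) (hdenpos i)
  have haA : ∀ i, A ≤ a i := by
    intro i
    rw [ha', le_div_iff₀ (hdenpos i)]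
    nlinarith [(hρ i).1, hρpos i, hden1 i, hdenpos i]
  have haB : ∀ i, a i * B ≤ 1 := by
    intro i
    rw [ha', div_mul_eq_mul_div, div_le_one (hdenpos i)]
    nlinarith [hρ1 i, hρpos i, hden i, hB0]
  have hqa : ∀ i, q i = a i * ρ i := by
    intro i
    rw [hq', ha', div_mul_eq_mul_div, sq]
  have hql : ∀ i, A^2 ≤ q i := by
    intro i
    rw [hq', le_div_iff₀ (hdenpos i)]
    nlinarith [(hρ i).1, hρpos i, hden1 i, hdenpos i, hA0, sq_nonneg (ρ i)]
  have hqB : ∀ i, q i * B ≤ 1 := by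
    intro i
    rw [hq', div_mul_eq_mul_div, div_le_one (hdenpos i)]
    nlinarith [hρ1 i, hρpos i, hden i, hB0]
  have hpl : ∀ i, A^2 ≤ p i := by
    intro i
    rw [hp', sq]
    exact mul_le_mul (haA i) (hρs i).1 hA0.le (hapos i).le
  have hpB : ∀ i, p i * B ≤ 1 := by
    intro i
    rw [hp']
    calc a i * ρs i * B = (a i * B) * ρs i := by ring
    _ ≤ 1 * 1 := mul_le_mul (haB i) (hρs1 i) (hρspos i).le (by linarith [haB i, mul_pos (hapos i) hB0])
    _ = 1 := by ring
  obtain ⟨Q, hQ⟩ : ∃ x : ℝ, x = ∑ j, q j := ⟨_, rfl⟩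
  obtain ⟨R, hR⟩ : ∃ x : ℝ, x = ∑ j, p j := ⟨_, rfl⟩
  have hQB : Q * B ≤ (n:ℝ) := by
    rw [hQ, Finset.sum_mul]
    calc ∑ j, q j * B ≤ ∑ _j : Fin n, (1:ℝ) := Finset.sum_le_sum (fun j _ => hqB j)
    _ = (n:ℝ) := by rw [Finset.sum_const, Finset.card_univ, Fintype.card_fin]; ring
  have hQpos : 0 < Q := by
    rw [hQ]
    exact Finset.sum_pos (fun i _ => lt_of_lt_of_le (by positivity) (hql i)) ⟨⟨0, hn0⟩, mem_univ _⟩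
  have hSpos : (0:ℝ) < 1 + Q := by linarith
  have hSB : (1 + Q) * B ≤ 2*(n:ℝ) := by nlinarith [hQB, hB1', hnR]
  -- G and the first identity
  obtain ⟨G, hG⟩ : ∃ x : Fin n → ℝ, x = fun i => p i * (R - p i) - q i * (Q - q i) := ⟨_, rfl⟩
  have hG' : ∀ i, G i = p i * (R - p i) - q i * (Q - q i) := fun i => by rw [hG]
  obtain ⟨F, hF⟩ : ∃ x : Fin n → ℝ,
      x = fun i => ∑ j ∈ Finset.univ.erase i, (ρs i * ρs j - ρ i * ρ j) * lam n ρ j := ⟨_, rfl⟩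
  have hF' : ∀ i, F i = ∑ j ∈ Finset.univ.erase i, (ρs i * ρs j - ρ i * ρ j) * lam n ρ j :=
    fun i => by rw [hF]
  have hlam : ∀ j, lam n ρ j = a j / (1 + Q) := by
    intro j
    have h1 : (∑ k, ρ k ^ 2 / (1 - ρ k ^ 2)) = Q := by
      rw [hQ]
      exact Finset.sum_congr rfl (fun k _ => (hq' k).symm)
    rw [lam, h1, ha']
  have hFi : ∀ i, F i = (ρs i * (R - p i) - ρ i * (Q - q i)) / (1 + Q) := by
    intro i
    rw [hF']
    have h2 : ∀ j ∈ Finset.univ.erase i, (ρs i * ρs j - ρ i * ρ j) * lam n ρ j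
        = (ρs i * p j - ρ i * q j) / (1 + Q) := by
      intro j _
      rw [hlam j, hp', hqa]
      field_simp
    rw [Finset.sum_congr rfl h2, ← Finset.sum_div]
    congr 1
    rw [Finset.sum_sub_distrib, ← Finset.mul_sum, ← Finset.mul_sum,
      Finset.sum_erase_eq_sub (mem_univ i), Finset.sum_erase_eq_sub (mem_univ i), ← hR, ← hQ]
  have hGF : ∀ i, G i = a i * (1 + Q) * F i := by
    intro i
    rw [hFi i, hG']
    have hS0 : (1 + Q) ≠ 0 := ne_of_gt hSpos
    field_simp
    rw [hp', hqa]
    ring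
  -- e, μ and the second identity
  have hMsum : (∑ j, (p j + q j)) = R + Q := by
    rw [Finset.sum_add_distrib, ← hR, ← hQ]
  have hesum : (∑ j, (p j - q j)) = R - Q := by
    rw [Finset.sum_sub_distrib, ← hR, ← hQ]
  -- max of |G|
  obtain ⟨m, -, hm⟩ := Finset.exists_max_image (univ : Finset (Fin n))
    (fun i => |G i|) ⟨⟨0, hn0⟩, mem_univ _⟩
  have hmmax : ∀ i, |G i| ≤ |G m| := fun i => hm i (mem_univ i)
  -- apply the core lemma
  have hμl : ∀ i, 2*A^2 ≤ p i + q i := fun i => by linarith [hpl i, hql i]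
  have hμu : ∀ i, (p i + q i) * B ≤ 2 := by
    intro i
    have := hpB i; have := hqB i
    nlinarith
  have hw : ∀ i, (0:ℝ) ≤ |ρs i - ρ i| := fun i => abs_nonneg _
  have hea : ∀ i, p i - q i = a i * (ρs i - ρ i) := by
    intro i; rw [hp', hqa]; ring
  have hwμ : ∀ i, |ρs i - ρ i| * (p i + q i) ≤ 2*|p i - q i| := by
    intro i
    have h1 : p i + q i ≤ 2 * a i := by
      have h2 : p i + q i = a i * (ρs i + ρ i) := by rw [hp', hqa]; ring
      rw [h2]
      have h3 : ρs i + ρ i ≤ 2 := by linarith [hρs1 i, hρ1 i]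
      nlinarith [hapos i]
    calc |ρs i - ρ i| * (p i + q i) ≤ |ρs i - ρ i| * (2 * a i) :=
        mul_le_mul_of_nonneg_left h1 (abs_nonneg _)
    _ = 2*(a i * |ρs i - ρ i|) := by ring
    _ = 2*|p i - q i| := by
        rw [hea i, abs_mul, abs_of_pos (hapos i)]
  have hkeyid : ∀ i, (p i - q i) * ((R + Q) - 2*(p i + q i)) - (p i + q i)*(Q - R)
      = 2 * G i := by
    intro i; rw [hG']; ring
  have hcore : ∀ i, A^6*B*|ρs i - ρ i| ≤ 3*(n:ℝ)^2*|G m| := by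
    rcases le_total R Q with hor | hor
    · refine core_bound hn A B (Q - R) (|G m|) (fun i => p i + q i) (fun i => p i - q i)
        (fun i => |ρs i - ρ i|) hA0 hA1' hB0 hB1' (by linarith) (abs_nonneg _)
        hμl hμu ?_ ?_ hw hwμ
      · intro i
        rw [hMsum, hkeyid i, abs_mul, abs_two]
        exact mul_le_mul_of_nonneg_left (hmmax i) (by norm_num)
      · rw [hesum]; ring
    · refine core_bound hn A B (R - Q) (|G m|) (fun i => p i + q i) (fun i => -(p i - q i))
        (fun i => |ρs i - ρ i|) hA0 hA1' hB0 hB1' (by linarith) (abs_nonneg _)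
        hμl hμu ?_ ?_ hw ?_
      · intro i
        rw [hMsum]
        have h4 : -(p i - q i) * (R + Q - 2*(p i + q i)) - (p i + q i)*(R - Q)
            = -(2 * G i) := by
          have := hkeyid i; linarith [hkeyid i]
        rw [h4, abs_neg, abs_mul, abs_two]
        exact mul_le_mul_of_nonneg_left (hmmax i) (by norm_num)
      · rw [Finset.sum_neg_distrib, hesum]
      · intro i; rw [abs_neg]; exact hwμ i
  -- assemble the final bound
  obtain ⟨js, -, hjs⟩ := Finset.exists_max_image (univ : Finset (Fin n))
    (fun i => |ρs i - ρ i|) ⟨⟨0, hn0⟩, mem_univ _⟩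
  have hjsmax : ∀ i, |ρs i - ρ i| ≤ |ρs js - ρ js| := fun i => hjs i (mem_univ i)
  have key2 : A^6*B*|ρs js - ρ js| ≤ 3*(n:ℝ)^2*|G m| := hcore js
  have key1 : |G m| * B^2 ≤ 2*(n:ℝ)*|F m| := by
    have h5 : |G m| = (a m * (1 + Q)) * |F m| := by
      rw [hGF m, abs_mul, abs_mul, abs_of_pos (hapos m), abs_of_pos hSpos]
    calc |G m| * B^2 = (a m * B)*(((1 + Q)*B)*|F m|) := by rw [h5]; ring
    _ ≤ 1*(((1 + Q)*B)*|F m|) := by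
        apply mul_le_mul_of_nonneg_right (haB m)
        exact mul_nonneg (mul_nonneg hSpos.le hB0.le) (abs_nonneg _)
    _ = ((1 + Q)*B)*|F m| := one_mul _
    _ ≤ (2*(n:ℝ))*|F m| := mul_le_mul_of_nonneg_right hSB (abs_nonneg _)
  -- squares
  have e1 : (A^6*B*|ρs js - ρ js|)^2 ≤ (3*(n:ℝ)^2*|G m|)^2 :=
    pow_le_pow_left₀ (by positivity) key2 2
  have e2 : (|G m| * B^2)^2 ≤ (2*(n:ℝ)*|F m|)^2 :=
    pow_le_pow_left₀ (by positivity) key1 2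
  have e3 : A^12*B^6*|ρs js - ρ js|^2 ≤ 36*(n:ℝ)^6*(F m)^2 := by
    have e1' : (A^6*B*|ρs js - ρ js|)^2 * B^4 ≤ (3*(n:ℝ)^2*|G m|)^2 * B^4 :=
      mul_le_mul_of_nonneg_right e1 (by positivity)
    have e2' : 9*(n:ℝ)^4*(|G m| * B^2)^2 ≤ 9*(n:ℝ)^4*(2*(n:ℝ)*|F m|)^2 :=
      mul_le_mul_of_nonneg_left e2 (by positivity)
    calc A^12*B^6*|ρs js - ρ js|^2 = (A^6*B*|ρs js - ρ js|)^2 * B^4 := by ring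
    _ ≤ (3*(n:ℝ)^2*|G m|)^2 * B^4 := e1'
    _ = 9*(n:ℝ)^4*(|G m| * B^2)^2 := by ring
    _ ≤ 9*(n:ℝ)^4*(2*(n:ℝ)*|F m|)^2 := e2'
    _ = 36*(n:ℝ)^6*|F m|^2 := by ring
    _ = 36*(n:ℝ)^6*(F m)^2 := by rw [sq_abs]
  have hsum_d : (∑ i, (ρ i - ρs i)^2) ≤ (n:ℝ)*|ρs js - ρ js|^2 := by
    have h6 : ∀ i ∈ (univ : Finset (Fin n)), (ρ i - ρs i)^2 ≤ |ρs js - ρ js|^2 := by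
      intro i _
      calc (ρ i - ρs i)^2 = |ρ i - ρs i|^2 := (sq_abs _).symm
      _ = |ρs i - ρ i|^2 := by rw [abs_sub_comm]
      _ ≤ |ρs js - ρ js|^2 := pow_le_pow_left₀ (abs_nonneg _) (hjsmax i) 2
    calc (∑ i, (ρ i - ρs i)^2) ≤ ∑ _i : Fin n, |ρs js - ρ js|^2 := Finset.sum_le_sum h6
    _ = (n:ℝ)*|ρs js - ρ js|^2 := by
        rw [Finset.sum_const, Finset.card_univ, Fintype.card_fin, nsmul_eq_mul]
  have hFm_le : (F m)^2 ≤ ∑ i, (F i)^2 :=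
    Finset.single_le_sum (fun i _ => sq_nonneg (F i)) (mem_univ m)
  have hgoalF : (∑ i, (∑ j ∈ Finset.univ.erase i,
      (ρs i * ρs j - ρ i * ρ j) * lam n ρ j) ^ 2) = ∑ i, (F i)^2 := by
    exact Finset.sum_congr rfl (fun i _ => by rw [hF' i])
  rw [hgoalF]
  -- final numeric assembly
  have hSd : (0:ℝ) ≤ ∑ i, (ρ i - ρs i)^2 := Finset.sum_nonneg (fun i _ => sq_nonneg _)
  have hSF : (0:ℝ) ≤ ∑ i, (F i)^2 := Finset.sum_nonneg (fun i _ => sq_nonneg _)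
  have h4 : A^12*B^6*(∑ i, (ρ i - ρs i)^2) ≤ 36*(n:ℝ)^7*(∑ i, (F i)^2) := by
    have h7 : A^12*B^6*(∑ i, (ρ i - ρs i)^2) ≤ A^12*B^6*((n:ℝ)*|ρs js - ρ js|^2) :=
      mul_le_mul_of_nonneg_left hsum_d (by positivity)
    have h8 : (n:ℝ)*(A^12*B^6*|ρs js - ρ js|^2) ≤ (n:ℝ)*(36*(n:ℝ)^6*(F m)^2) :=
      mul_le_mul_of_nonneg_left e3 (by positivity)
    have h9 : 36*(n:ℝ)^7*(F m)^2 ≤ 36*(n:ℝ)^7*(∑ i, (F i)^2) :=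
      mul_le_mul_of_nonneg_left hFm_le (by positivity)
    nlinarith [h7, h8, h9]
  have h10 : 1/100*(A^12*B^8/(n:ℝ)^11)*(∑ i, (ρ i - ρs i)^2)
      = (A^12*B^8*(∑ i, (ρ i - ρs i)^2))/(100*(n:ℝ)^11) := by ring
  rw [h10, div_le_iff₀ (by positivity)]
  have h11 : A^12*B^8*(∑ i, (ρ i - ρs i)^2) ≤ A^12*B^6*(∑ i, (ρ i - ρs i)^2) := by
    have h12 : B^8 ≤ B^6 := pow_le_pow_of_le_one hB0.le hB1' (by omega)
    have h13 : A^12*B^8 ≤ A^12*B^6 := mul_le_mul_of_nonneg_left h12 (by positivity)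
    exact mul_le_mul_of_nonneg_right h13 hSd
  have h14 : 36*(n:ℝ)^7 ≤ 100*(n:ℝ)^11 := by
    have h15 : (n:ℝ)^7 ≤ (n:ℝ)^11 := pow_le_pow_right₀ (by linarith) (by omega)
    nlinarith [pow_pos hnR 7, pow_pos hnR 11]
  have h16 : 36*(n:ℝ)^7*(∑ i, (F i)^2) ≤ 100*(n:ℝ)^11*(∑ i, (F i)^2) :=
    mul_le_mul_of_nonneg_right h14 hSF
  nlinarith [h4, h11, h16]
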